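/- Acceptance probability of the NQP-to-DQC1 reduction circuit: let U be unitary on (C^2)^{⊗n}, Π₁ an orthogonal projection, and p = ‖Π₁ U |0⟩^{⊗n}‖². Define the unit vector φ = U†(I - 2Π₁)U|0⟩^{⊗n}. Then 1 - |⟨0^{⊗n}, φ⟩|² = 4p(1-p), and hence the probability (1/2^n)·(1 - |⟨0^{⊗n}, φ⟩|²) equals (4/2^n)·p(1-p). -/

import Mathlib

open Matrix

lemma adj_shift {m : Type*} [Fintype m] [DecidableEq m]
    (A : Matrix m m ℂ) (v w : m → ℂ) :
    star v ⬝ᵥ (Aᴴ *ᵥ w) = star (A *ᵥ v) ⬝ᵥ w := by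
  rw [Matrix.star_mulVec, Matrix.dotProduct_mulVec]

/-- Acceptance probability of the NQP-to-DQC1 reduction: with `U` unitary,
`Pr₁` an orthogonal projection, `p = ‖Pr₁ U |0⟩^{⊗n}‖²`, and
`φ = U†(I - 2Pr₁)U|0⟩^{⊗n}`, one has `1 - |⟨0^{⊗n}, φ⟩|² = 4p(1-p)`, hence
`(1/2^n)(1 - |⟨0^{⊗n}, φ⟩|²) = (4/2^n) p(1-p)`. -/
theorem stmt15 (n : ℕ)
    (U : Matrix (Fin n → Fin 2) (Fin n → Fin 2) ℂ)
    (hU : U ∈ Matrix.unitaryGroup (Fin n → Fin 2) ℂ)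
    (Pr₁ : Matrix (Fin n → Fin 2) (Fin n → Fin 2) ℂ)
    (hidem : Pr₁ * Pr₁ = Pr₁) (hsa : Pr₁ᴴ = Pr₁)
    (e0 : (Fin n → Fin 2) → ℂ)
    (he0 : e0 = fun x => if x = (fun _ => 0) then (1 : ℂ) else 0)
    (p : ℝ)
    (hp : p = ((star (Pr₁ *ᵥ (U *ᵥ e0))) ⬝ᵥ (Pr₁ *ᵥ (U *ᵥ e0))).re)
    (φ : (Fin n → Fin 2) → ℂ)
    (hφ : φ = (Uᴴ * (1 - (2 : ℂ) • Pr₁) * U) *ᵥ e0) :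
    1 - ‖star e0 ⬝ᵥ φ‖ ^ 2 = 4 * p * (1 - p) ∧
    ((2 : ℝ) ^ n)⁻¹ * (1 - ‖star e0 ⬝ᵥ φ‖ ^ 2)
      = 4 / 2 ^ n * (p * (1 - p)) := by
  have hUU : Uᴴ * U = 1 := by
    have := hU.1
    simpa [Matrix.star_eq_conjTranspose] using this
  set ψ : (Fin n → Fin 2) → ℂ := U *ᵥ e0 with hψ
  set a : (Fin n → Fin 2) → ℂ := Pr₁ *ᵥ ψ with ha
  -- q is real nonneg
  have hq_real : star a ⬝ᵥ a = ((star a ⬝ᵥ a).re : ℂ) := by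
    have : star a ⬝ᵥ a = ((∑ i, Complex.normSq (a i) : ℝ) : ℂ) := by
      push_cast
      simp [dotProduct, ← Complex.normSq_eq_conj_mul_self]
    rw [this]
    simp
  have hqp : star a ⬝ᵥ a = (p : ℂ) := by rw [hq_real, ← hp]
  have hnorm1 : star e0 ⬝ᵥ e0 = 1 := by
    subst he0
    simp [dotProduct, apply_ite]
  have hψψ : star ψ ⬝ᵥ ψ = 1 := by
    rw [hψ, Matrix.star_mulVec, Matrix.dotProduct_mulVec, Matrix.vecMul_vecMul,
      hUU, Matrix.vecMul_one, hnorm1]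
  have key : star e0 ⬝ᵥ φ = 1 - 2 * (p : ℂ) := by
    rw [hφ]
    have hexp : Uᴴ * (1 - (2 : ℂ) • Pr₁) * U
        = 1 - (2 : ℂ) • ((Pr₁ * U)ᴴ * (Pr₁ * U)) := by
      rw [Matrix.conjTranspose_mul, hsa]
      rw [mul_sub, sub_mul, mul_one, hUU]
      simp only [Matrix.mul_smul, Matrix.smul_mul]
      congr 1
      simp only [← mul_assoc]
      rw [mul_assoc Uᴴ Pr₁ Pr₁, hidem]
    rw [hexp, Matrix.sub_mulVec, dotProduct_sub, Matrix.one_mulVec, hnorm1,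
      Matrix.smul_mulVec, dotProduct_smul, ← Matrix.mulVec_mulVec,
      adj_shift]
    rw [show (Pr₁ * U) *ᵥ e0 = a from by rw [ha, hψ, ← Matrix.mulVec_mulVec],
      hqp, smul_eq_mul]
  have habs : ‖star e0 ⬝ᵥ φ‖ ^ 2 = (1 - 2 * p) ^ 2 := by
    rw [key]
    rw [show (1 : ℂ) - 2 * (p : ℂ) = ((1 - 2 * p : ℝ) : ℂ) by push_cast; ring]
    rw [Complex.norm_real, Real.norm_eq_abs, sq_abs]
  constructor
  · rw [habs]; ring
  · rw [habs]; ring
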